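/- Let p ≠ 0 be a real number and define σ : ℝ → ℝ by σ(r) ≔ −(r² + p²)/(4p) (so σ is nowhere zero). Then for all real numbers k₁ and k₂, the function β(r) ≔ k₁·(p² − r²)/(r² + p²) + k₂·r/(r² + p²) satisfies the linear ordinary differential equation σ(r)·β''(r) + σ'(r)·β'(r) + β(r)/(4·σ(r)) = 0 for all r ∈ ℝ. -/

import Mathlib

/-- The function `σ(r) = −(r² + p²)/(4p)` (with `p ≠ 0`). -/
noncomputable def sigmaFun (p : ℝ) : ℝ → ℝ := fun r => -(r ^ 2 + p ^ 2) / (4 * p)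

lemma hasDerivAt_sigmaFun (p r : ℝ) : HasDerivAt (sigmaFun p) (-(2 * r) / (4 * p)) r := by
  have heq : sigmaFun p = fun x : ℝ => (-p ^ 2 + -x ^ 2) / (4 * p) := by
    funext x; simp only [sigmaFun]; ring
  rw [heq]
  have h : HasDerivAt (fun r : ℝ => -(r ^ 2 + p ^ 2)) (-(2 * r)) r := by
    simpa using (((hasDerivAt_pow 2 r).add_const (p ^ 2)).fun_neg)
  have : HasDerivAt (fun x : ℝ => -(x ^ 2 + p ^ 2) / (4 * p)) (-(2 * r) / (4 * p)) r :=
    h.div_const (4 * p)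
  convert this using 2 with x
  ring

/-- For every `k₁, k₂`, the function `β(r) = k₁(p² − r²)/(r² + p²) + k₂ r/(r² + p²)`
solves `σβ'' + σ'β' + β/(4σ) = 0` with `σ(r) = −(r² + p²)/(4p)`. -/
theorem beta_solves_ode (p : ℝ) (hp : p ≠ 0) (k₁ k₂ : ℝ) :
    letI β : ℝ → ℝ := fun r => k₁ * (p ^ 2 - r ^ 2) / (r ^ 2 + p ^ 2) + k₂ * r / (r ^ 2 + p ^ 2)
    ∀ r : ℝ, sigmaFun p r * deriv (deriv β) r + deriv (sigmaFun p) r * deriv β r +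
      β r / (4 * sigmaFun p r) = 0 := by
  intro r
  set β : ℝ → ℝ := fun s => k₁ * (p ^ 2 - s ^ 2) / (s ^ 2 + p ^ 2) + k₂ * s / (s ^ 2 + p ^ 2)
    with hβdef
  have hp2 : (0:ℝ) < p ^ 2 := by positivity
  have hd : ∀ s : ℝ, s ^ 2 + p ^ 2 ≠ 0 := fun s => by positivity
  -- rewrite β as a single quotient
  have hβeq : β = fun s => (k₁ * (p ^ 2 - s ^ 2) + k₂ * s) / (s ^ 2 + p ^ 2) := by
    funext s
    show k₁ * (p ^ 2 - s ^ 2) / (s ^ 2 + p ^ 2) + k₂ * s / (s ^ 2 + p ^ 2) = _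
    rw [← add_div]
  have hden : ∀ s : ℝ, HasDerivAt (fun s : ℝ => s ^ 2 + p ^ 2) (2 * s) s := fun s => by
    simpa using (hasDerivAt_pow 2 s).add_const (p ^ 2)
  have hnum : ∀ s : ℝ, HasDerivAt (fun s : ℝ => k₁ * (p ^ 2 - s ^ 2) + k₂ * s)
      (-(2 * s) * k₁ + k₂) s := fun s => by
    have h1 : HasDerivAt (fun s : ℝ => k₁ * (p ^ 2 - s ^ 2)) (-(2 * s) * k₁) s := by
      have : HasDerivAt (fun s : ℝ => p ^ 2 - s ^ 2) (-(2 * s)) s := by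
        simpa using ((hasDerivAt_pow 2 s).const_sub (p ^ 2))
      simpa [mul_comm] using this.const_mul k₁
    simpa using h1.fun_add ((hasDerivAt_id s).const_mul k₂)
  -- first derivative formula
  set B1 : ℝ → ℝ := fun s =>
    ((-(2 * s) * k₁ + k₂) * (s ^ 2 + p ^ 2) -
      (k₁ * (p ^ 2 - s ^ 2) + k₂ * s) * (2 * s)) / (s ^ 2 + p ^ 2) ^ 2 with hB1def
  have hβ' : ∀ s : ℝ, HasDerivAt β (B1 s) s := fun s => by
    rw [hβeq]
    exact (hnum s).div (hden s) (hd s)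
  have hderivβ : deriv β = B1 := funext fun s => (hβ' s).deriv
  -- second derivative
  have hU : ∀ s : ℝ, HasDerivAt (fun s : ℝ =>
      (-(2 * s) * k₁ + k₂) * (s ^ 2 + p ^ 2) - (k₁ * (p ^ 2 - s ^ 2) + k₂ * s) * (2 * s))
      ((-2 * k₁) * (s ^ 2 + p ^ 2) + (-(2 * s) * k₁ + k₂) * (2 * s) -
       ((-(2 * s) * k₁ + k₂) * (2 * s) + (k₁ * (p ^ 2 - s ^ 2) + k₂ * s) * 2)) s := fun s => by
    have h1 : HasDerivAt (fun s : ℝ => -(2 * s) * k₁ + k₂) (-2 * k₁) s := by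
      have : HasDerivAt (fun s : ℝ => -(2 * s)) (-2) s := by
        simpa using ((hasDerivAt_id s).const_mul (2:ℝ)).fun_neg
      simpa using (this.mul_const k₁).add_const k₂
    have h2 : HasDerivAt (fun s : ℝ => (2:ℝ) * s) 2 s := by
      simpa using (hasDerivAt_id s).const_mul (2:ℝ)
    exact ((h1.mul (hden s)).sub ((hnum s).mul h2))
  have hV : ∀ s : ℝ, HasDerivAt (fun s : ℝ => (s ^ 2 + p ^ 2) ^ 2)
      (2 * (s ^ 2 + p ^ 2) * (2 * s)) s := fun s => by
    simpa using ((hden s).fun_pow 2)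
  have hB1' : HasDerivAt B1
      ((((-2 * k₁) * (r ^ 2 + p ^ 2) + (-(2 * r) * k₁ + k₂) * (2 * r) -
        ((-(2 * r) * k₁ + k₂) * (2 * r) + (k₁ * (p ^ 2 - r ^ 2) + k₂ * r) * 2)) *
        ((r ^ 2 + p ^ 2) ^ 2) -
        ((-(2 * r) * k₁ + k₂) * (r ^ 2 + p ^ 2) -
          (k₁ * (p ^ 2 - r ^ 2) + k₂ * r) * (2 * r)) * (2 * (r ^ 2 + p ^ 2) * (2 * r))) /
        ((r ^ 2 + p ^ 2) ^ 2) ^ 2) r := by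
    exact (hU r).div (hV r) (pow_ne_zero 2 (hd r))
  have hσ' : deriv (sigmaFun p) r = -(2 * r) / (4 * p) := (hasDerivAt_sigmaFun p r).deriv
  rw [hderivβ, hB1'.deriv, hσ']
  simp only [hB1def, hβdef, sigmaFun]
  have h4p : (4:ℝ) * p ≠ 0 := by positivity
  rw [show (4:ℝ) * (-(r ^ 2 + p ^ 2) / (4 * p)) = -((r ^ 2 + p ^ 2) / p) by
    field_simp]
  rw [div_neg, div_div_eq_mul_div]
  field_simp [hd r, hp]
  ring
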